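/- A nonvanishing Ext² obstruction for the link Floer complex of the torus link T(2,4). Let R₂ = F2[W₁, Z₁, W₂, Z₂] be the polynomial ring in four commuting variables over F2. Consider the three-term complex of finite free R₂-modules C₂ →^{d₂} C₁ →^{d₁} C₀, where C₂ = R₂ with basis {e}, C₁ = R₂⁴ with basis {a, b, c, d}, C₀ = R₂³ with basis {x, y, z}, and the differentials are d₁(a) = W₂·x + Z₁·y, d₁(b) = W₁·x + Z₂·y, d₁(c) = W₂·y + Z₁·z, d₁(d) = W₁·y + Z₂·z, and d₂(e) = W₁·a + W₂·b + Z₂·c + Z₁·d. Then d₁ ∘ d₂ = 0, and the R₂-linear map φ : C₂ → C₀ defined by φ(e) = y (a chain map of homological degree −2) is not null-homotopic: there exist no R₂-linear maps h₂ : C₂ → C₁ and h₁ : C₁ → C₀ with φ = d₁ ∘ h₂ + h₁ ∘ d₂. -/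
import Mathlib


local notation "R₂" => MvPolynomial (Fin 4) (ZMod 2)
local notation "W₁" => (MvPolynomial.X 0 : MvPolynomial (Fin 4) (ZMod 2))
local notation "Z₁" => (MvPolynomial.X 1 : MvPolynomial (Fin 4) (ZMod 2))
local notation "W₂" => (MvPolynomial.X 2 : MvPolynomial (Fin 4) (ZMod 2))
local notation "Z₂" => (MvPolynomial.X 3 : MvPolynomial (Fin 4) (ZMod 2))

/-- A nonvanishing `Ext²` obstruction for the link Floer complex of the torus link `T(2,4)`:
`d₁ ∘ d₂ = 0`, and the degree `−2` chain map `φ` with `φ(e) = y` is not null-homotopic. -/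
theorem torus_link_T24_ext_two_obstruction
    (d₁ : (Fin 4 → R₂) →ₗ[R₂] (Fin 3 → R₂))
    (d₂ : R₂ →ₗ[R₂] (Fin 4 → R₂))
    (φ : R₂ →ₗ[R₂] (Fin 3 → R₂))
    (hd₁a : d₁ (Pi.single (0 : Fin 4) 1) = Pi.single (0 : Fin 3) W₂ + Pi.single (1 : Fin 3) Z₁)
    (hd₁b : d₁ (Pi.single (1 : Fin 4) 1) = Pi.single (0 : Fin 3) W₁ + Pi.single (1 : Fin 3) Z₂)
    (hd₁c : d₁ (Pi.single (2 : Fin 4) 1) = Pi.single (1 : Fin 3) W₂ + Pi.single (2 : Fin 3) Z₁)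
    (hd₁d : d₁ (Pi.single (3 : Fin 4) 1) = Pi.single (1 : Fin 3) W₁ + Pi.single (2 : Fin 3) Z₂)
    (hd₂ : d₂ 1 = Pi.single (0 : Fin 4) W₁ + Pi.single (1 : Fin 4) W₂ +
      Pi.single (2 : Fin 4) Z₂ + Pi.single (3 : Fin 4) Z₁)
    (hφ : φ 1 = Pi.single (1 : Fin 3) 1) :
    d₁ ∘ₗ d₂ = 0 ∧
    ¬ ∃ (h₂ : R₂ →ₗ[R₂] (Fin 4 → R₂)) (h₁ : (Fin 4 → R₂) →ₗ[R₂] (Fin 3 → R₂)),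
        φ = d₁ ∘ₗ h₂ + h₁ ∘ₗ d₂ := by
  have two : (2 : R₂) = 0 := CharTwo.two_eq_zero
  have sp : ∀ (i : Fin 4) (p : R₂), d₁ (Pi.single i p) = p • d₁ (Pi.single i 1) := by
    intro i p
    rw [← map_smul, ← Pi.single_smul, smul_eq_mul, mul_one]
  have hdd : d₁ (d₂ 1) = 0 := by
    rw [hd₂, map_add, map_add, map_add, sp 0 W₁, sp 1 W₂, sp 2 Z₂, sp 3 Z₁,
      hd₁a, hd₁b, hd₁c, hd₁d]
    funext j
    fin_cases j <;>
      simp [Pi.single_apply, smul_eq_mul] <;> ring_nf <;>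
      simp [two, two_mul]
  constructor
  · apply LinearMap.ext_ring
    simpa using hdd
  · rintro ⟨h₂, h₁, heq⟩
    have h1 : φ 1 = d₁ (h₂ 1) + h₁ (d₂ 1) := by rw [heq]; rfl
    have hvsplit : h₂ 1 = (h₂ 1) 0 • (Pi.single (0 : Fin 4) (1 : R₂) : Fin 4 → R₂)
        + (h₂ 1) 1 • (Pi.single (1 : Fin 4) (1 : R₂) : Fin 4 → R₂)
        + (h₂ 1) 2 • (Pi.single (2 : Fin 4) (1 : R₂) : Fin 4 → R₂)
        + (h₂ 1) 3 • (Pi.single (3 : Fin 4) (1 : R₂) : Fin 4 → R₂) := by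
      funext j; fin_cases j <;> simp [Pi.single_apply]
    have hdv : d₁ (h₂ 1) = (h₂ 1) 0 • (Pi.single (0 : Fin 3) W₂ + Pi.single (1 : Fin 3) Z₁)
        + (h₂ 1) 1 • (Pi.single (0 : Fin 3) W₁ + Pi.single (1 : Fin 3) Z₂)
        + (h₂ 1) 2 • (Pi.single (1 : Fin 3) W₂ + Pi.single (2 : Fin 3) Z₁)
        + (h₂ 1) 3 • (Pi.single (1 : Fin 3) W₁ + Pi.single (2 : Fin 3) Z₂) := by
      conv_lhs => rw [hvsplit]
      rw [map_add, map_add, map_add, map_smul, map_smul, map_smul, map_smul,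
        hd₁a, hd₁b, hd₁c, hd₁d]
    have spp : ∀ (i : Fin 4) (p : R₂), h₁ (Pi.single i p) = p • h₁ (Pi.single i 1) := by
      intro i p
      rw [← map_smul, ← Pi.single_smul, smul_eq_mul, mul_one]
    rw [hφ, hdv, hd₂, map_add, map_add, map_add, spp 0 W₁, spp 1 W₂, spp 2 Z₂,
      spp 3 Z₁] at h1
    have h2 := congrFun h1 1
    simp only [Pi.add_apply, Pi.smul_apply, Pi.single_apply, smul_eq_mul] at h2
    norm_num at h2
    have h3 := congrArg MvPolynomial.constantCoeff h2
    simp [MvPolynomial.constantCoeff_X] at h3
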